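/- (Exponential lower bound on nonzero oracle entries.) Let n ≥ 1, let s : V be nonzero, let g : V → ZMod 2 satisfy g 0 = 0, and let σ : V → V be any family satisfying the recursive Bernstein–Vazirani condition g (σ x) = s ⬝ x for all x : V. Then the number of x : V with σ x ≠ 0 is at least 2^(n−1). (This is the counting fact behind the claim that a generic level-2 oracle needs at least 2^(n−1) multi-controlled CNOT gates.) -/

import Mathlib

theorem bv_exponential_nonzero_entries (n : ℕ) (hn : 1 ≤ n)
    (s : Fin n → ZMod 2) (hs : s ≠ 0)
    (g : (Fin n → ZMod 2) → ZMod 2) (hg0 : g 0 = 0)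
    (σ : (Fin n → ZMod 2) → (Fin n → ZMod 2))
    (hσ : ∀ x : Fin n → ZMod 2, g (σ x) = ∑ i, s i * x i) :
    2 ^ (n - 1) ≤ (Finset.univ.filter fun x : Fin n → ZMod 2 => σ x ≠ 0).card := by
  classical
  obtain ⟨j, hj⟩ : ∃ j, s j ≠ 0 := by
    by_contra h
    push_neg at h
    exact hs (funext fun i => h i)
  have hj1 : s j = 1 := by
    have h2 : ∀ a : ZMod 2, a ≠ 0 → a = 1 := by decide
    exact h2 _ hj
  set A : Finset (Fin n → ZMod 2) :=
    Finset.univ.filter (fun x => (∑ i, s i * x i) = 1) with hA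
  set B : Finset (Fin n → ZMod 2) :=
    Finset.univ.filter (fun x => (∑ i, s i * x i) = 0) with hB
  -- A ⊆ target set
  have hsub : A ⊆ Finset.univ.filter (fun x => σ x ≠ 0) := by
    intro x hx
    simp only [hA, Finset.mem_filter, Finset.mem_univ, true_and] at hx ⊢
    intro hzero
    have := hσ x
    rw [hzero, hg0, hx] at this
    exact one_ne_zero this.symm
  -- injection B → A
  have hle : B.card ≤ A.card := by
    apply Finset.card_le_card_of_injOn (fun x => x + Pi.single j 1)
    · intro x hx
      simp only [hB, Finset.mem_coe, Finset.mem_filter, Finset.mem_univ, true_and] at hx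
      simp only [hA, Finset.mem_coe, Finset.mem_filter, Finset.mem_univ, true_and]
      have h1 : ∑ i, s i * (x + Pi.single j 1 : Fin n → ZMod 2) i
          = (∑ i, s i * x i) + ∑ i, s i * (Pi.single j 1 : Fin n → ZMod 2) i := by
        rw [← Finset.sum_add_distrib]
        refine Finset.sum_congr rfl fun i _ => ?_
        simp [mul_add]
      rw [h1, hx, zero_add]
      simp [Pi.single_apply, mul_ite, hj1]
    · intro a _ b _ hab
      have := congrArg (fun f => f - Pi.single j 1) hab
      simpa using this
  -- A ∪ B = univ
  have hcard : A.card + B.card = 2 ^ n := by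
    have hdis : Disjoint A B := by
      rw [Finset.disjoint_filter]
      intro x _ h1 h0
      rw [h1] at h0
      exact one_ne_zero h0
    rw [← Finset.card_union_of_disjoint hdis]
    have : A ∪ B = Finset.univ := by
      ext x
      simp only [hA, hB, Finset.mem_union, Finset.mem_filter, Finset.mem_univ, true_and,
        iff_true]
      have h01 : ∀ a : ZMod 2, a = 0 ∨ a = 1 := by decide
      rcases h01 (∑ i, s i * x i) with h | h
      · exact Or.inr h
      · exact Or.inl h
    rw [this, Finset.card_univ]
    simp [Fintype.card_fun]
  have h2 : 2 ^ n ≤ 2 * A.card := by omega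
  have hpow : 2 ^ n = 2 * 2 ^ (n - 1) := by
    rw [← pow_succ']
    congr 1
    omega
  have : 2 ^ (n - 1) ≤ A.card := by omega
  exact le_trans this (Finset.card_le_card hsub)
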